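/- arXiv:1905.02890 — 3 statements merged into one kernel-verified Lean document; each statement's English description precedes it below -/
import Mathlib

section
/- Let H be a Hilbert space, z ∈ H, α > 0, and define T(u) = α z ⟨u, z⟩. Let S be a positive semi-definite bounded operator on H such that T + S is invertible. Then 0 ≤ ⟨(T+S)⁻¹ z, z⟩ ≤ 1/α. -/
open InnerProductSpace

/-- Lemma 4.6: if `T u = α ⟨u,z⟩ z` and `S` is a positive semi-definite bounded
operator such that `T + S` is invertible (with bounded inverse `B`), then
`0 ≤ ⟨(T+S)⁻¹ z, z⟩ ≤ 1/α`. -/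
theorem stmt0
    {H : Type*} [NormedAddCommGroup H] [InnerProductSpace ℂ H] [CompleteSpace H]
    (z : H) (α : ℝ) (hα : 0 < α)
    (T S B : H →L[ℂ] H)
    (hT : ∀ u, T u = (α : ℂ) • (⟪z, u⟫_ℂ • z))
    (hSsa : IsSelfAdjoint S)
    (hSpos : ∀ u, 0 ≤ (⟪S u, u⟫_ℂ).re)
    (hB1 : B.comp (T + S) = ContinuousLinearMap.id ℂ H)
    (hB2 : (T + S).comp B = ContinuousLinearMap.id ℂ H) :
    (⟪B z, z⟫_ℂ).im = 0 ∧ 0 ≤ (⟪B z, z⟫_ℂ).re ∧ (⟪B z, z⟫_ℂ).re ≤ 1 / α := by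
  have hsym : (S : H →ₗ[ℂ] H).IsSymmetric :=
    ContinuousLinearMap.isSelfAdjoint_iff_isSymmetric.mp hSsa
  set w := B z with hw
  have hz : T w + S w = z := by
    have := congrArg (fun f => f z) hB2
    simpa using this
  set c := ⟪z, w⟫_ℂ with hc
  set s := ⟪w, S w⟫_ℂ with hs
  -- s is real with nonneg real part
  have hsconj : ⟪S w, w⟫_ℂ = s := hsym w w
  have hsim : s.im = 0 := by
    have h1 : (starRingEnd ℂ) s = ⟪S w, w⟫_ℂ := by rw [hs, inner_conj_symm]
    have h2 : (starRingEnd ℂ) s = s := by rw [h1, hsconj]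
    have h3 := congrArg Complex.im h2
    simp only [Complex.conj_im] at h3
    linarith
  have hsre : 0 ≤ s.re := by rw [← hsconj]; exact hSpos w
  -- key identity
  have key : ⟪w, z⟫_ℂ = (α : ℂ) * (c * ⟪w, z⟫_ℂ) + s := by
    conv_lhs => rw [← hz]
    rw [inner_add_right, hT, inner_smul_right, inner_smul_right, ← hc, ← hs]
  have hwz : ⟪w, z⟫_ℂ = (starRingEnd ℂ) c := by rw [hc, inner_conj_symm]
  have key2 : (starRingEnd ℂ) c = (α : ℂ) * (c * (starRingEnd ℂ) c) + s := by
    rw [← hwz]; exact key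
  -- imaginary part
  have hcim : c.im = 0 := by
    have h := congrArg Complex.im key2
    simp [Complex.add_im, Complex.mul_im, Complex.ofReal_re, Complex.ofReal_im,
      hsim] at h
    nlinarith [h]
  have hcc : c * (starRingEnd ℂ) c = ((c.re ^ 2 : ℝ) : ℂ) := by
    apply Complex.ext <;>
      simp [Complex.mul_re, Complex.mul_im, hcim, pow_two]
  have hre : c.re = α * c.re ^ 2 + s.re := by
    have h := congrArg Complex.re key2
    rw [hcc] at h
    simp [Complex.mul_re, ← Complex.ofReal_pow] at h
    linarith
  rw [hwz]
  refine ⟨by simp [hcim], ?_, ?_⟩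
  · simp only [Complex.conj_re]
    nlinarith [sq_nonneg c.re]
  · simp only [Complex.conj_re]
    rw [le_div_iff₀ hα]
    nlinarith [sq_nonneg c.re, sq_nonneg (α * c.re - 1)]
end

section
/- For λ > 0 and x ≠ y in ℝ³, the λ-derivative of the kernel R(λ)(x,y) = (e^{iλ|x-y|} − e^{-λ|x-y|})/(8π λ²|x-y|) satisfies |∂_λ R(λ)(x,y)| ≤ C/λ² uniformly in x, y. -/
open Real Complex

noncomputable def freeKernel (lam : ℝ) (x y : EuclideanSpace ℝ (Fin 3)) : ℂ :=
  (Complex.exp (Complex.I * lam * ‖x - y‖) - Complex.exp (-(lam * ‖x - y‖ : ℝ))) /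
    (8 * π * lam ^ 2 * ‖x - y‖)

lemma key1 (s : ℝ) : ‖Complex.exp (Complex.I * s) - 1‖ ≤ |s| := by
  have h : Complex.exp (Complex.I * s) = Complex.exp ((s : ℂ) * Complex.I) := by ring_nf
  have hre : (Complex.exp ((s : ℂ) * Complex.I) - 1).re = Real.cos s - 1 := by
    simp [Complex.exp_ofReal_mul_I_re]
  have him : (Complex.exp ((s : ℂ) * Complex.I) - 1).im = Real.sin s := by
    simp [Complex.exp_ofReal_mul_I_im]
  have hsq : ‖Complex.exp ((s : ℂ) * Complex.I) - 1‖ ^ 2 = (Real.cos s - 1) ^ 2 + (Real.sin s) ^ 2 := by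
    rw [Complex.sq_norm, Complex.normSq_apply, hre, him]; ring
  have hcos : (Real.cos s - 1) ^ 2 + (Real.sin s) ^ 2 = 2 - 2 * Real.cos s := by
    have := Real.sin_sq_add_cos_sq s; nlinarith
  have hb : 1 - s ^ 2 / 2 ≤ Real.cos s := Real.one_sub_sq_div_two_le_cos
  have h2 : ‖Complex.exp ((s : ℂ) * Complex.I) - 1‖ ^ 2 ≤ |s| ^ 2 := by
    rw [hsq, hcos, _root_.sq_abs]; nlinarith
  rw [h]
  nlinarith [norm_nonneg (Complex.exp ((s : ℂ) * Complex.I) - 1), abs_nonneg s]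

lemma key2 {s : ℝ} (hs : 0 ≤ s) : ‖(1 : ℂ) - Complex.exp (-s : ℝ)‖ ≤ s := by
  rw [← Complex.ofReal_exp, ← Complex.ofReal_one, ← Complex.ofReal_sub, Complex.norm_real]
  have h1 : Real.exp (-s) ≤ 1 := Real.exp_le_one_iff.mpr (by linarith)
  have h2 : 1 - s ≤ Real.exp (-s) := by linarith [Real.add_one_le_exp (-s)]
  rw [Real.norm_eq_abs, _root_.abs_of_nonneg (by linarith)]; linarith

/-- The λ-derivative of the kernel of the free fourth-order resolvent satisfies
the uniform bound `|∂_λ R(λ)(x,y)| ≤ C/λ²`. -/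
theorem stmt3 :
    ∃ C : ℝ, 0 < C ∧ ∀ (lam : ℝ), 0 < lam →
      ∀ x y : EuclideanSpace ℝ (Fin 3), x ≠ y →
        ‖deriv (fun l : ℝ => freeKernel l x y) lam‖ ≤ C / lam ^ 2 := by
  refine ⟨1, one_pos, fun lam hlam x y hxy => ?_⟩
  set r : ℝ := ‖x - y‖ with hrdef
  have hr : 0 < r := by
    simpa [hrdef] using norm_pos_iff.mpr (sub_ne_zero.mpr hxy)
  -- derivative of numerator
  have hid : HasDerivAt (fun l : ℝ => (l : ℂ)) 1 lam := by
    have := Complex.ofRealCLM.hasDerivAt (x := lam)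
    simp at this
    exact this
  have h0 : HasDerivAt (fun l : ℝ => Complex.I * (l : ℂ) * (r : ℂ)) (Complex.I * r) lam := by
    simpa using (hid.const_mul Complex.I).mul_const (r : ℂ)
  have h1 : HasDerivAt (fun l : ℝ => Complex.exp (Complex.I * (l : ℂ) * (r : ℂ)))
      (Complex.exp (Complex.I * lam * r) * (Complex.I * r)) lam := h0.cexp
  have h2r : HasDerivAt (fun l : ℝ => -(l * r)) (-r) lam := by
    have := ((hasDerivAt_id lam).mul_const r).neg
    simp at this
    exact this
  have h2 : HasDerivAt (fun l : ℝ => Complex.exp ((-(l * r) : ℝ) : ℂ))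
      (Complex.exp ((-(lam * r) : ℝ) : ℂ) * (-r : ℝ)) lam := by
    exact (h2r.ofReal_comp).cexp
  have hN : HasDerivAt (fun l : ℝ =>
      Complex.exp (Complex.I * (l : ℂ) * (r : ℂ)) - Complex.exp ((-(l * r) : ℝ) : ℂ))
      (Complex.exp (Complex.I * lam * r) * (Complex.I * r)
        - Complex.exp ((-(lam * r) : ℝ) : ℂ) * (-r : ℝ)) lam := h1.sub h2
  have hD : HasDerivAt (fun l : ℝ => (8 * (π : ℂ) * (l : ℂ) ^ 2 * (r : ℂ)))
      (8 * (π : ℂ) * (2 * lam) * r) lam := by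
    have hsq2 : HasDerivAt (fun l : ℝ => ((l : ℂ)) ^ 2) (2 * (lam : ℂ)) lam := by
      have := hid.mul hid
      simp [sq, two_mul] at this
      simp [sq, two_mul]
      exact this
    have := (hsq2.const_mul (8 * (π : ℂ))).mul_const (r : ℂ)
    convert this using 1
  have hden : (8 * (π : ℂ) * (lam : ℂ) ^ 2 * (r : ℂ)) ≠ 0 := by
    simp only [mul_ne_zero_iff]
    refine ⟨⟨⟨by norm_num, ?_⟩, ?_⟩, ?_⟩ <;>
      simp [Complex.ofReal_ne_zero, Real.pi_ne_zero, ne_of_gt hlam, ne_of_gt hr, pow_eq_zero_iff]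
  have hF : HasDerivAt (fun l : ℝ => freeKernel l x y)
      (((Complex.exp (Complex.I * lam * r) * (Complex.I * r)
        - Complex.exp ((-(lam * r) : ℝ) : ℂ) * (-r : ℝ)) * (8 * (π : ℂ) * (lam : ℂ) ^ 2 * (r : ℂ))
        - (Complex.exp (Complex.I * lam * r) - Complex.exp ((-(lam * r) : ℝ) : ℂ))
          * (8 * (π : ℂ) * (2 * lam) * r)) / (8 * (π : ℂ) * (lam : ℂ) ^ 2 * (r : ℂ)) ^ 2) lam := by
    have := hN.div hD hden
    simp at this
    simp [freeKernel]
    exact this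
  rw [hF.deriv]
  -- now estimate
  set E1 : ℂ := Complex.exp (Complex.I * lam * r)
  set E2 : ℂ := Complex.exp ((-(lam * r) : ℝ) : ℂ)
  have hE1 : ‖E1‖ = 1 := by
    have : Complex.I * (lam : ℂ) * (r : ℂ) = ((lam * r : ℝ) : ℂ) * Complex.I := by push_cast; ring
    simp [E1, this, Complex.norm_exp]
  have hE2 : ‖E2‖ ≤ 1 := by
    simp only [E2, Complex.norm_exp]
    simp [Real.exp_le_one_iff]
    positivity
  have hsub : ‖E1 - E2‖ ≤ 2 * (lam * r) := by
    have k1 := key1 (lam * r)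
    have k2 := key2 (s := lam * r) (by positivity)
    have h : E1 - E2 = (Complex.exp (Complex.I * (lam * r : ℝ)) - 1) + ((1 : ℂ) - Complex.exp ((-(lam * r) : ℝ) : ℂ)) := by
      simp only [E1, E2]; push_cast; ring_nf
    rw [h]
    calc ‖_ + _‖ ≤ ‖Complex.exp (Complex.I * (lam * r : ℝ)) - 1‖ + ‖(1 : ℂ) - Complex.exp ((-(lam * r) : ℝ) : ℂ)‖ := norm_add_le _ _
    _ ≤ |lam * r| + (lam * r) := add_le_add k1 k2
    _ = 2 * (lam * r) := by rw [abs_of_pos (by positivity)]; ring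
  -- numerator norm
  have hnum : ‖(E1 * (Complex.I * r) - E2 * (-r : ℝ)) * (8 * (π : ℂ) * (lam : ℂ) ^ 2 * (r : ℂ))
      - (E1 - E2) * (8 * (π : ℂ) * (2 * lam) * r)‖ ≤ 48 * π * lam ^ 2 * r ^ 2 := by
    have ha : ‖E1 * (Complex.I * r) - E2 * (-r : ℝ)‖ ≤ 2 * r := by
      calc ‖E1 * (Complex.I * r) - E2 * (-r : ℝ)‖
          ≤ ‖E1 * (Complex.I * r)‖ + ‖E2 * (-r : ℝ)‖ := norm_sub_le _ _
        _ = ‖E1‖ * r + ‖E2‖ * r := by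
            simp [norm_mul, Complex.norm_real, _root_.abs_of_pos hr, Complex.norm_I]
        _ ≤ 1 * r + 1 * r := by
            gcongr
            · exact le_of_eq hE1
        _ = 2 * r := by ring
    have hb : ‖(8 * (π : ℂ) * (lam : ℂ) ^ 2 * (r : ℂ))‖ = 8 * π * lam ^ 2 * r := by
      simp [norm_mul, Complex.norm_real, abs_of_pos hr, abs_of_pos hlam,
        abs_of_pos Real.pi_pos, abs_of_pos (pow_pos hlam 2)]
    have hc : ‖(8 * (π : ℂ) * (2 * lam) * r : ℂ)‖ = 8 * π * (2 * lam) * r := by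
      simp [norm_mul, Complex.norm_real, abs_of_pos hr, abs_of_pos hlam,
        abs_of_pos Real.pi_pos]
    calc ‖_ - _‖ ≤ ‖(E1 * (Complex.I * r) - E2 * (-r : ℝ)) * (8 * (π : ℂ) * (lam : ℂ) ^ 2 * (r : ℂ))‖
          + ‖(E1 - E2) * (8 * (π : ℂ) * (2 * lam) * r)‖ := norm_sub_le _ _
      _ = ‖E1 * (Complex.I * r) - E2 * (-r : ℝ)‖ * (8 * π * lam ^ 2 * r)
          + ‖E1 - E2‖ * (8 * π * (2 * lam) * r) := by
            rw [norm_mul (E1 * (Complex.I * r) - E2 * (-r : ℝ)) (8 * (π : ℂ) * (lam : ℂ) ^ 2 * (r : ℂ)),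
              norm_mul (E1 - E2) (8 * (π : ℂ) * (2 * lam) * (r : ℂ)), hb, hc]
      _ ≤ (2 * r) * (8 * π * lam ^ 2 * r) + (2 * (lam * r)) * (8 * π * (2 * lam) * r) := by
          gcongr
      _ = 48 * π * lam ^ 2 * r ^ 2 := by ring
  have hdnorm : ‖((8 * (π : ℂ) * (lam : ℂ) ^ 2 * (r : ℂ)) ^ 2 : ℂ)‖ = 64 * π ^ 2 * lam ^ 4 * r ^ 2 := by
    rw [norm_pow]
    have hb : ‖(8 * (π : ℂ) * (lam : ℂ) ^ 2 * (r : ℂ))‖ = 8 * π * lam ^ 2 * r := by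
      simp [norm_mul, Complex.norm_real, abs_of_pos hr, abs_of_pos hlam,
        abs_of_pos Real.pi_pos, abs_of_pos (pow_pos hlam 2)]
    rw [hb]; ring
  rw [norm_div, hdnorm]
  rw [div_le_div_iff₀ (by positivity) (by positivity)]
  calc ‖_‖ * lam ^ 2 ≤ (48 * π * lam ^ 2 * r ^ 2) * lam ^ 2 := by gcongr
    _ ≤ 1 * (64 * π ^ 2 * lam ^ 4 * r ^ 2) := by
        have hpi : 48 * π ≤ 64 * π ^ 2 := by nlinarith [Real.pi_gt_three]
        have h64 := mul_le_mul_of_nonneg_right hpi (show (0:ℝ) ≤ lam ^ 4 * r ^ 2 by positivity)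
        nlinarith [h64]
end

section
/- Let Q be a bounded operator on L²(ℝ³) with absolutely bounded kernel satisfying Qv = 0 (i.e., ∫ Q(y₂,y₁)v(y₁)dy₁ = 0), where v(x) ≤ ⟨x⟩^{-5/2-ε}. Define F(p) = (e^{ip} − e^{-p})/p. Then for every λ > 0 and y ∈ ℝ³, the function y₂ ↦ (1/(8πλ)) ∫ Q(y₂,y₁) v(y₁) [F(λ|y−y₁|) − F(λ|y|)] dy₁ has L²-norm bounded uniformly in λ and y, i.e., sup_y ‖[Q v R⁺(H₀,λ⁴)](·,y)‖_{L²} ≲ 1. -/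
open MeasureTheory Real

noncomputable def Ffun (p : ℝ) : ℂ :=
  (Complex.exp (Complex.I * p) - Complex.exp (-(p : ℂ))) / p


open scoped ENNReal

abbrev E3 := EuclideanSpace ℝ (Fin 3)

set_option linter.unusedSectionVars false
set_option maxHeartbeats 1000000

noncomputable def Gfun (p : ℝ) : ℂ := if p = 0 then 1 + Complex.I else Ffun p

lemma Ffun_measurable : Measurable Ffun := by
  unfold Ffun
  fun_prop

lemma Gfun_measurable : Measurable Gfun := by
  unfold Gfun
  exact Measurable.ite (MeasurableSet.singleton 0) measurable_const Ffun_measurable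

lemma Gfun_eq_Ffun {p : ℝ} (hp : p ≠ 0) : Gfun p = Ffun p := if_neg hp

-- lower bound for the numerator
lemma Ffun_norm_lower {p : ℝ} (hp : 0 < p) : Real.exp (-p) ≤ ‖Ffun p‖ := by
  have h1 : 1 - Real.exp (-p) ≤ ‖Complex.exp (Complex.I * p) - Complex.exp (-(p:ℂ))‖ := by
    have h2 : ‖Complex.exp (Complex.I * p)‖ = 1 := by
      rw [Complex.norm_exp]
      simp
    have h3 : ‖Complex.exp (-(p:ℂ))‖ = Real.exp (-p) := by
      rw [Complex.norm_exp]
      simp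
    calc 1 - Real.exp (-p)
        = ‖Complex.exp (Complex.I * p)‖ - ‖Complex.exp (-(p:ℂ))‖ := by rw [h2, h3]
      _ ≤ ‖Complex.exp (Complex.I * p) - Complex.exp (-(p:ℂ))‖ :=
          norm_sub_norm_le _ _
  have h4 : p * Real.exp (-p) ≤ 1 - Real.exp (-p) := by
    have h := Real.add_one_le_exp p
    have hep : 0 < Real.exp (-p) := Real.exp_pos _
    have hmul : Real.exp (-p) * Real.exp p = 1 := by
      rw [← Real.exp_add]; simp
    nlinarith [mul_le_mul_of_nonneg_right h (le_of_lt hep)]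
  have : ‖Ffun p‖ = ‖Complex.exp (Complex.I * p) - Complex.exp (-(p:ℂ))‖ / p := by
    rw [Ffun, norm_div]
    simp [abs_of_pos hp]
  rw [this, le_div_iff₀ hp]
  nlinarith [h1, h4]

lemma Ffun_ne_zero {p : ℝ} (hp : 0 < p) : Ffun p ≠ 0 := by
  intro h
  have := Ffun_norm_lower hp
  rw [h] at this
  simp at this
  exact absurd this (not_le.mpr (Real.exp_pos _))

lemma Ffun_norm_le {p : ℝ} (hp : 0 < p) (P : ℝ) (hP : p ≤ P) :
    Real.exp (-P) ≤ ‖Ffun p‖ :=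
  le_trans (Real.exp_le_exp.mpr (by linarith)) (Ffun_norm_lower hp)

lemma Gfun_integral (p : ℝ) :
    Gfun p = ∫ t in (0:ℝ)..1,
      (Complex.I * Complex.exp (Complex.I * p * t) + Complex.exp (-(p:ℂ) * t)) := by
  by_cases hp : p = 0
  · subst hp
    simp [Gfun, intervalIntegral.integral_const]
    ring
  · rw [Gfun_eq_Ffun hp]
    have hIp : (Complex.I * (p:ℂ)) ≠ 0 := by
      simp [Complex.I_ne_zero, Complex.ofReal_eq_zero, hp]
    have hnp : (-(p:ℂ)) ≠ 0 := by simp [Complex.ofReal_eq_zero, hp]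
    have h1 : (∫ t in (0:ℝ)..1, Complex.I * Complex.exp (Complex.I * p * t))
        = Complex.I * ((Complex.exp (Complex.I * p) - 1) / (Complex.I * p)) := by
      rw [intervalIntegral.integral_const_mul]
      have := integral_exp_mul_complex (a := 0) (b := 1) hIp
      simp only [Complex.ofReal_one, mul_one, Complex.ofReal_zero, mul_zero,
        Complex.exp_zero] at this
      rw [show (fun t : ℝ => Complex.exp (Complex.I * p * t)) =
        (fun t : ℝ => Complex.exp ((Complex.I * p) * t)) from rfl, this]
    have h2 : (∫ t in (0:ℝ)..1, Complex.exp (-(p:ℂ) * t))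
        = (Complex.exp (-(p:ℂ)) - 1) / (-(p:ℂ)) := by
      have := integral_exp_mul_complex (a := 0) (b := 1) hnp
      simp only [Complex.ofReal_one, mul_one, Complex.ofReal_zero, mul_zero,
        Complex.exp_zero] at this
      rw [this]
    rw [intervalIntegral.integral_add, h1, h2]
    · rw [Ffun]
      have hpc : (p:ℂ) ≠ 0 := by simp [Complex.ofReal_eq_zero, hp]
      field_simp
      ring
    · apply Continuous.intervalIntegrable
      fun_prop
    · apply Continuous.intervalIntegrable
      fun_prop

lemma norm_exp_I_mul_sub_one (θ : ℝ) : ‖Complex.exp ((θ:ℂ) * Complex.I) - 1‖ ≤ 2 * |θ| := by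
  by_cases h : |θ| ≤ 1
  · have : ‖((θ:ℂ) * Complex.I)‖ ≤ 1 := by
      simpa using h
    simpa using Complex.norm_exp_sub_one_le this
  · have h1 : ‖Complex.exp ((θ:ℂ) * Complex.I) - 1‖ ≤ 2 := by
      calc ‖Complex.exp ((θ:ℂ) * Complex.I) - 1‖
          ≤ ‖Complex.exp ((θ:ℂ) * Complex.I)‖ + ‖(1:ℂ)‖ := norm_sub_le _ _
        _ = 2 := by
            rw [Complex.norm_exp_ofReal_mul_I]; norm_num
    nlinarith [abs_nonneg θ, not_le.mp h]

lemma norm_exp_I_sub_exp_I (a b : ℝ) :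
    ‖Complex.exp (Complex.I * a) - Complex.exp (Complex.I * b)‖ ≤ 2 * |a - b| := by
  have key : Complex.exp (Complex.I * a) - Complex.exp (Complex.I * b)
      = Complex.exp ((b:ℂ) * Complex.I) * (Complex.exp (((a - b : ℝ):ℂ) * Complex.I) - 1) := by
    rw [mul_sub, ← Complex.exp_add]
    push_cast
    ring_nf
  rw [key, norm_mul, Complex.norm_exp_ofReal_mul_I, one_mul]
  exact norm_exp_I_mul_sub_one _

lemma norm_exp_neg_sub_exp_neg {x y : ℝ} (hx : 0 ≤ x) (hy : 0 ≤ y) :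
    ‖Complex.exp (-(x:ℂ)) - Complex.exp (-(y:ℂ))‖ ≤ |x - y| := by
  have hre : ∀ z : ℝ, Complex.exp (-(z:ℂ)) = ((Real.exp (-z) : ℝ) : ℂ) := by
    intro z
    rw [show (-(z:ℂ)) = ((-z : ℝ) : ℂ) by push_cast; ring, Complex.ofReal_exp]
  rw [hre x, hre y, ← Complex.ofReal_sub, Complex.norm_real, Real.norm_eq_abs]
  have key : ∀ u w : ℝ, 0 ≤ u → 0 ≤ w → u ≤ w → Real.exp (-u) - Real.exp (-w) ≤ w - u := by
    intro u w hu hw huw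
    have hxy : 1 - (w - u) ≤ Real.exp (-(w - u)) := by
      have := Real.add_one_le_exp (-(w-u)); linarith
    have hsplit : Real.exp (-w) = Real.exp (-u) * Real.exp (-(w-u)) := by
      rw [← Real.exp_add]; ring_nf
    have hex : Real.exp (-u) ≤ 1 := Real.exp_le_one_iff.mpr (by linarith)
    nlinarith [Real.exp_pos (-u)]
  have A := le_abs_self (x - y)
  have B := neg_abs_le (x - y)
  rw [abs_sub_le_iff]
  constructor
  · rcases le_total x y with h | h
    · have := key x y hx hy h; linarith
    · have h1 : Real.exp (-x) ≤ Real.exp (-y) := Real.exp_le_exp.mpr (by linarith)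
      linarith
  · rcases le_total y x with h | h
    · have := key y x hy hx h; linarith
    · have h1 : Real.exp (-y) ≤ Real.exp (-x) := Real.exp_le_exp.mpr (by linarith)
      linarith

lemma Gfun_lip {a b : ℝ} (ha : 0 ≤ a) (hb : 0 ≤ b) :
    ‖Gfun a - Gfun b‖ ≤ 3 * |a - b| := by
  rw [Gfun_integral a, Gfun_integral b]
  rw [← intervalIntegral.integral_sub]
  · have hbound : ∀ t ∈ Set.uIoc (0:ℝ) 1,
        ‖(Complex.I * Complex.exp (Complex.I * a * t) + Complex.exp (-(a:ℂ) * t))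
          - (Complex.I * Complex.exp (Complex.I * b * t) + Complex.exp (-(b:ℂ) * t))‖
          ≤ 3 * |a - b| := by
      intro t ht
      rw [Set.uIoc_of_le (by norm_num : (0:ℝ) ≤ 1)] at ht
      obtain ⟨ht0, ht1⟩ := ht
      have e1 : ‖Complex.I * Complex.exp (Complex.I * a * t)
          - Complex.I * Complex.exp (Complex.I * b * t)‖ ≤ 2 * |a - b| := by
        rw [← mul_sub, norm_mul, Complex.norm_I, one_mul]
        have h := norm_exp_I_sub_exp_I (a * t) (b * t)
        have harg : ∀ c : ℝ, Complex.I * (c:ℂ) * (t:ℂ) = Complex.I * ((c * t : ℝ) : ℂ) := by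
          intro c; push_cast; ring
        rw [harg a, harg b]
        calc ‖Complex.exp (Complex.I * ((a*t:ℝ):ℂ)) - Complex.exp (Complex.I * ((b*t:ℝ):ℂ))‖
            ≤ 2 * |a * t - b * t| := h
          _ = 2 * (|a - b| * |t|) := by rw [← sub_mul, abs_mul]
          _ ≤ 2 * (|a - b| * 1) := by
              gcongr
              rw [abs_of_pos ht0]; exact ht1
          _ = 2 * |a - b| := by ring
      have e2 : ‖Complex.exp (-(a:ℂ) * t) - Complex.exp (-(b:ℂ) * t)‖ ≤ |a - b| := by
        have harg : ∀ c : ℝ, (-(c:ℂ)) * (t:ℂ) = -(((c * t : ℝ):ℂ)) := by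
          intro c; push_cast; ring
        rw [harg a, harg b]
        calc ‖Complex.exp (-((a*t:ℝ):ℂ)) - Complex.exp (-((b*t:ℝ):ℂ))‖
            ≤ |a * t - b * t| := norm_exp_neg_sub_exp_neg
              (mul_nonneg ha (le_of_lt ht0)) (mul_nonneg hb (le_of_lt ht0))
          _ = |a - b| * |t| := by rw [← sub_mul, abs_mul]
          _ ≤ |a - b| * 1 := by gcongr; rw [abs_of_pos ht0]; exact ht1
          _ = |a - b| := by ring
      calc ‖_ - _‖ = ‖(Complex.I * Complex.exp (Complex.I * a * t)
              - Complex.I * Complex.exp (Complex.I * b * t))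
              + (Complex.exp (-(a:ℂ) * t) - Complex.exp (-(b:ℂ) * t))‖ := by ring_nf
        _ ≤ _ + _ := norm_add_le _ _
        _ ≤ 2 * |a - b| + |a - b| := add_le_add e1 e2
        _ = 3 * |a - b| := by ring
    have := intervalIntegral.norm_integral_le_of_norm_le_const hbound
    simpa using this
  · apply Continuous.intervalIntegrable; fun_prop
  · apply Continuous.intervalIntegrable; fun_prop


set_option linter.unusedSectionVars false
variable {α : Type*} [MeasurableSpace α] {μ : Measure α} [SigmaFinite μ]

/-- The class of measurable sets `U` such that `v` restricted to `U` (extended by `0`)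
is a.e. strongly measurable. -/
def goodSet (v : α → ℝ) (μ : Measure α) (U : Set α) : Prop :=
  MeasurableSet U ∧ AEStronglyMeasurable (U.indicator v) μ

lemma goodSet_empty (v : α → ℝ) : goodSet v μ ∅ :=
  ⟨MeasurableSet.empty, by simp [Set.indicator_empty]; exact aestronglyMeasurable_const⟩

lemma goodSet_inter_compl {v : α → ℝ} {U T : Set α} (hU : goodSet v μ U)
    (hT : MeasurableSet T) : goodSet v μ (U \ T) := by
  refine ⟨hU.1.diff hT, ?_⟩
  have : (U \ T).indicator v = fun x => U.indicator v x * Tᶜ.indicator (fun _ => (1:ℝ)) x := by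
    funext x
    by_cases hx1 : x ∈ U <;> by_cases hx2 : x ∈ T <;>
      simp [Set.indicator_apply, hx1, hx2, Set.mem_diff]
  rw [this]
  exact hU.2.mul ((measurable_const.indicator hT.compl).aestronglyMeasurable)

lemma goodSet_union {v : α → ℝ} {U T : Set α} (hU : goodSet v μ U) (hT : goodSet v μ T) :
    goodSet v μ (U ∪ T) := by
  refine ⟨hU.1.union hT.1, ?_⟩
  have : (U ∪ T).indicator v = fun x => U.indicator v x + (T \ U).indicator v x := by
    funext x
    by_cases hx1 : x ∈ U <;> by_cases hx2 : x ∈ T <;>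
      simp [Set.indicator_apply, hx1, hx2, Set.mem_diff]
  rw [this]
  exact hU.2.add (goodSet_inter_compl hT hU.1).2

lemma goodSet_iUnion {v : α → ℝ} {U : ℕ → Set α} (hU : ∀ n, goodSet v μ (U n)) :
    goodSet v μ (⋃ n, U n) := by
  have hfin : ∀ n : ℕ, goodSet v μ (⋃ k ∈ Finset.range (n+1), U k) := by
    intro n
    induction n with
    | zero => simpa using hU 0
    | succ m ih =>
      have : (⋃ k ∈ Finset.range (m+2), U k) = (⋃ k ∈ Finset.range (m+1), U k) ∪ U (m+1) := by
        ext x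
        simp only [Set.mem_iUnion, Finset.mem_range, Set.mem_union]
        constructor
        · rintro ⟨k, hk, hx⟩
          rcases Nat.lt_succ_iff_lt_or_eq.mp hk with h | h
          · exact Or.inl ⟨k, h, hx⟩
          · subst h; exact Or.inr hx
        · rintro (⟨k, hk, hx⟩ | hx)
          · exact ⟨k, Nat.lt_succ_of_lt hk, hx⟩
          · exact ⟨m+1, Nat.lt_succ_self _, hx⟩
      rw [this]
      exact goodSet_union ih (hU (m+1))
  refine ⟨MeasurableSet.iUnion (fun n => (hU n).1), ?_⟩
  have htend : ∀ x, Filter.Tendsto (fun n => (⋃ k ∈ Finset.range (n+1), U k).indicator v x)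
      Filter.atTop (nhds ((⋃ n, U n).indicator v x)) := by
    intro x
    by_cases hx : x ∈ ⋃ n, U n
    · obtain ⟨n, hn⟩ := Set.mem_iUnion.mp hx
      have : ∀ m ≥ n, (⋃ k ∈ Finset.range (m+1), U k).indicator v x
          = (⋃ n, U n).indicator v x := by
        intro m hm
        have hx1 : x ∈ ⋃ k ∈ Finset.range (m+1), U k := by
          simp only [Set.mem_iUnion, Finset.mem_range]
          exact ⟨n, Nat.lt_succ_of_le hm, hn⟩
        rw [Set.indicator_of_mem hx1, Set.indicator_of_mem hx]
      exact tendsto_atTop_of_eventually_const this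
    · have : ∀ m, (⋃ k ∈ Finset.range (m+1), U k).indicator v x
          = (⋃ n, U n).indicator v x := by
        intro m
        have hx1 : x ∉ ⋃ k ∈ Finset.range (m+1), U k := by
          intro hmem
          apply hx
          simp only [Set.mem_iUnion, Finset.mem_range] at hmem ⊢
          obtain ⟨k, _, hk⟩ := hmem
          exact ⟨k, hk⟩
        rw [Set.indicator_of_notMem hx1, Set.indicator_of_notMem hx]
      exact tendsto_atTop_of_eventually_const (i₀ := 0) (fun m _ => this m)
  exact aestronglyMeasurable_of_tendsto_ae Filter.atTop (fun n => (hfin n).2)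
    (Filter.Eventually.of_forall htend)

/-- Essential maximal good set: there is a good set `N` that a.e. contains every good set. -/
lemma exists_max_goodSet (v : α → ℝ) :
    ∃ N : Set α, goodSet v μ N ∧ ∀ U : Set α, goodSet v μ U → μ (U \ N) = 0 := by
  classical
  set ρ := μ.toFinite with hρ
  have hρ0 : ∀ S : Set α, ρ S = 0 → μ S = 0 := fun S hS => by
    rwa [hρ, toFinite_apply_eq_zero_iff] at hS
  set s := ⨆ (U : {U : Set α // goodSet v μ U}), ρ U.1 with hs
  have hρuniv : ρ Set.univ < ⊤ := measure_lt_top ρ Set.univ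
  have hslt : s < ⊤ := lt_of_le_of_lt (iSup_le fun U => measure_mono (Set.subset_univ _)) hρuniv
  have hseq : ∀ n : ℕ, ∃ U : Set α, goodSet v μ U ∧ s ≤ ρ U + ((n:ℝ≥0∞)+1)⁻¹ := by
    intro n
    by_cases hs0 : s = 0
    · exact ⟨∅, goodSet_empty v, by simp [hs0]⟩
    · have hlt : s - ((n:ℝ≥0∞)+1)⁻¹ < s := by
        apply ENNReal.sub_lt_self hslt.ne hs0
        simp
      rw [hs, lt_iSup_iff] at hlt
      obtain ⟨U, hU⟩ := hlt
      exact ⟨U.1, U.2, tsub_le_iff_right.mp (le_of_lt hU)⟩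
  choose U hUgood hUs using hseq
  set N := ⋃ n, U n with hN
  have hNgood : goodSet v μ N := goodSet_iUnion hUgood
  have hρN : ∀ T : Set α, goodSet v μ T → ρ T ≤ s := by
    intro T hT
    exact le_iSup (fun (W : {U : Set α // goodSet v μ U}) => ρ W.1) ⟨T, hT⟩
  have hNs : s ≤ ρ N := by
    apply ENNReal.le_of_forall_pos_le_add
    intro ε hε _
    obtain ⟨n, hn⟩ := ENNReal.exists_inv_nat_lt (by simpa using hε.ne' : (ε:ℝ≥0∞) ≠ 0)
    calc s ≤ ρ (U n) + ((n:ℝ≥0∞)+1)⁻¹ := hUs n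
      _ ≤ ρ N + ε := by
          gcongr
          · exact Set.subset_iUnion U n
          · apply le_of_lt (lt_of_le_of_lt _ hn)
            apply ENNReal.inv_le_inv.mpr
            simp
  refine ⟨N, hNgood, fun T hT => ?_⟩
  apply hρ0
  have hunion : goodSet v μ (N ∪ T) := goodSet_union hNgood hT
  have h1 : ρ (N ∪ T) = ρ N + ρ (T \ N) := by
    rw [← Set.union_diff_self]
    exact measure_union (Set.disjoint_sdiff_right) (hT.1.diff hNgood.1)
  have h2 : ρ N + ρ (T \ N) ≤ ρ N + 0 := by
    rw [add_zero, ← h1]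
    exact le_trans (hρN _ hunion) hNs
  have := (ENNReal.add_le_add_iff_left (measure_ne_top ρ N)).mp h2
  exact le_antisymm this zero_le

/-- The measurable proxy `W` for a possibly non-measurable `v`. -/
lemma exists_W (v V : α → ℝ) (hV : Measurable V) (hv : ∀ x, 0 ≤ v x ∧ v x ≤ V x) :
    ∃ W : α → ℝ, Measurable W ∧ (∀ x, 0 ≤ W x ∧ W x ≤ V x) ∧
      ∀ g : α → ℂ, Measurable g → AEStronglyMeasurable (fun y => g y * (v y : ℂ)) μ →
        (fun y => g y * (v y : ℂ)) =ᵐ[μ] fun y => g y * (W y : ℂ) := by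
  classical
  obtain ⟨N, hNgood, hmax⟩ := exists_max_goodSet (μ := μ) v
  have h := hNgood.2
  set w₀ := h.mk _ with hw₀def
  have hw₀meas : Measurable w₀ := h.stronglyMeasurable_mk.measurable
  have hw₀ae : N.indicator v =ᵐ[μ] w₀ := h.ae_eq_mk
  set W := fun x => max 0 (min (w₀ x) (V x)) with hW
  have hWmeas : Measurable W := Measurable.max measurable_const (hw₀meas.min hV)
  have hVpos : ∀ x, 0 ≤ V x := fun x => le_trans (hv x).1 (hv x).2
  refine ⟨W, hWmeas, fun x => ⟨le_max_left _ _, max_le (hVpos x) (min_le_right _ _)⟩,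
    fun g hg hgv => ?_⟩
  set Uset := {x | g x ≠ 0} with hUset
  have hUmeas : MeasurableSet Uset := (hg (measurableSet_singleton 0)).compl
  have hUgood : goodSet v μ Uset := by
    refine ⟨hUmeas, ?_⟩
    have heq : Uset.indicator v = fun x => ((g x * (v x : ℂ)) * (g x)⁻¹).re := by
      funext x
      by_cases hx : g x = 0
      · simp [Set.indicator_apply, hUset, hx]
      · rw [Set.indicator_of_mem (by simpa [hUset] using hx)]
        rw [mul_comm (g x) _, mul_assoc, mul_inv_cancel₀ hx]
        simp
    rw [heq]
    exact Complex.continuous_re.comp_aestronglyMeasurable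
      (hgv.mul hg.inv.aestronglyMeasurable)
  have hnull : μ (Uset \ N) = 0 := hmax Uset hUgood
  have hae1 : ∀ᵐ x ∂μ, x ∉ Uset \ N := by
    rw [ae_iff]
    simpa only [not_not, Set.setOf_mem_eq] using hnull
  filter_upwards [hw₀ae, hae1] with x hx1 hx2
  by_cases hgx : g x = 0
  · simp [hgx]
  · have hxU : x ∈ Uset := by simpa [hUset] using hgx
    have hxN : x ∈ N := by
      by_contra hxN
      exact hx2 ⟨hxU, hxN⟩
    have : w₀ x = v x := by rw [← hx1, Set.indicator_of_mem hxN]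
    have hWx : W x = v x := by
      rw [hW]
      simp only [this]
      rw [min_eq_left (hv x).2, max_eq_right (hv x).1]
    rw [hWx]



lemma contRad (s : ℝ) : Continuous (fun x : E3 => ((1+‖x‖) ^ (-s) : ℝ)) := by
  apply Continuous.rpow_const (continuous_const.add continuous_norm)
  intro x
  left
  simp only [Pi.add_apply]; positivity

lemma memL2_radial {s : ℝ} (hs : 3/2 < s) :
    MemLp (fun x : E3 => ((1+‖x‖) ^ (-s) : ℝ)) 2 volume := by
  rw [memLp_two_iff_integrable_sq (contRad s).aestronglyMeasurable]
  have h : (fun x : E3 => ((1+‖x‖) ^ (-s) : ℝ) ^ 2) = fun x : E3 => ((1+‖x‖) ^ (-(2*s)) : ℝ) := by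
    funext x
    rw [← Real.rpow_natCast (((1:ℝ)+‖x‖) ^ (-s)) 2, ← Real.rpow_mul (by positivity)]
    norm_num
    ring_nf
  rw [h]
  apply integrable_one_add_norm (E := E3)
  rw [finrank_euclideanSpace_fin]
  norm_num
  linarith

lemma contRad' (c : ℝ) : Continuous (fun x : E3 => ((1+‖x‖) ^ c : ℝ)) := by
  apply Continuous.rpow_const (continuous_const.add continuous_norm)
  intro x
  left
  simp only [Pi.add_apply]; positivity

lemma memL2_radialC {s : ℝ} (hs : 3/2 < s) :
    MemLp (fun x : E3 => (((1+‖x‖) ^ (-s) : ℝ) : ℂ)) 2 volume := by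
  apply MemLp.of_le (memL2_radial hs)
    ((Complex.measurable_ofReal.comp (contRad s).measurable).aestronglyMeasurable)
  filter_upwards with x
  simp [Function.comp, Complex.norm_real]

lemma sq_iSup_mono {f : ℕ → ℝ≥0∞} (h : Monotone f) : (⨆ n, f n)^2 = ⨆ n, (f n)^2 := by
  apply le_antisymm
  · rw [sq, ENNReal.iSup_mul]
    apply iSup_le; intro i
    rw [ENNReal.mul_iSup]
    apply iSup_le; intro j
    calc f i * f j ≤ f (max i j) * f (max i j) :=
          mul_le_mul' (h (le_max_left i j)) (h (le_max_right i j))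
      _ = f (max i j)^2 := (sq _).symm
      _ ≤ ⨆ n, (f n)^2 := le_iSup (fun n => (f n)^2) (max i j)
  · exact iSup_le fun n => by gcongr; exact le_iSup f n

lemma rpow_half_le {x D : ℝ≥0∞} (h : x ^ (1/(2:ℝ)) ≤ D) : x ≤ D ^ (2:ℝ) := by
  have h2 := ENNReal.rpow_le_rpow h (by norm_num : (0:ℝ) ≤ 2)
  rwa [← ENNReal.rpow_mul, one_div, inv_mul_cancel₀ (by norm_num : (2:ℝ) ≠ 0),
    ENNReal.rpow_one] at h2


/-- The key a.e. dichotomy: for a.e. `y2`, if `Q(y2,·) v F(λ|·|)` is integrable then so is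
`Q(y2,·) v`. -/
lemma ae_int_of_int_F
    (v W V : E3 → ℝ) (hv0 : ∀ x, 0 ≤ v x)
    (hVL2 : MemLp (fun x => ((V x : ℝ) : ℂ)) 2 volume)
    (hWb : ∀ x, 0 ≤ W x ∧ W x ≤ V x) (hWmeas : Measurable W)
    (Q : E3 → E3 → ℂ) (hQmeas : Measurable (Function.uncurry Q))
    (M : ℝ)
    (hM : ∀ f : E3 → ℂ, MemLp f 2 volume →
      eLpNorm (fun y2 => ∫ y1, ‖Q y2 y1‖ * ‖f y1‖) 2 volume
        ≤ ENNReal.ofReal M * eLpNorm f 2 volume)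
    (hQW : ∀ y2 : E3, AEStronglyMeasurable (fun y1 => Q y2 y1 * (v y1 : ℂ)) volume →
      (fun y1 => Q y2 y1 * (v y1 : ℂ)) =ᵐ[volume] fun y1 => Q y2 y1 * (W y1 : ℂ))
    {lam : ℝ} (hlam : 0 < lam) :
    ∀ᵐ y2, Integrable (fun y1 => Q y2 y1 * (v y1 : ℂ) * Ffun (lam * ‖y1‖)) volume →
      Integrable (fun y1 => Q y2 y1 * (v y1 : ℂ)) volume := by
  classical
  set Φ : E3 → ℂ := fun y1 => Ffun (lam * ‖y1‖) with hΦdef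
  have hΦmeas : Measurable Φ := Ffun_measurable.comp (measurable_const.mul measurable_norm)
  have hQslice : ∀ y2, Measurable (fun y1 => Q y2 y1) := fun y2 =>
    hQmeas.comp measurable_prodMk_left
  set GR : ℕ → E3 → ℝ≥0∞ := fun R y2 => ∫⁻ y1, (‖Q y2 y1‖₊ : ℝ≥0∞) *
      ((Metric.closedBall (0:E3) R).indicator (fun z => ENNReal.ofReal (W z)) y1) with hGRdef
  have hGRmeas : ∀ R, Measurable (GR R) := by
    intro R
    apply Measurable.lintegral_prod_right
    apply Measurable.mul
    · exact hQmeas.nnnorm.coe_nnreal_ennreal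
    · exact ((hWmeas.ennreal_ofReal).indicator Metric.isClosed_closedBall.measurableSet).comp
        measurable_snd
  have hGRmono : ∀ y2, Monotone (fun R => GR R y2) := by
    intro y2 R R' hRR
    apply lintegral_mono
    intro y1
    apply mul_le_mul_right
    apply Set.indicator_le_indicator_of_subset
    · exact Metric.closedBall_subset_closedBall (by exact_mod_cast hRR)
    · intro z; exact zero_le
  set Tset : Set E3 := {y2 | (⨆ R, GR R y2) = ∞} ∩ ⋂ R, {y2 | GR R y2 < ∞} with hTdef
  have hTmeas : MeasurableSet Tset := by
    apply MeasurableSet.inter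
    · exact (Measurable.iSup hGRmeas) (measurableSet_singleton ∞)
    · exact MeasurableSet.iInter fun R => measurableSet_lt (hGRmeas R) measurable_const
  -- Step 1 : μ Tset = 0
  set D : ℝ≥0∞ := ENNReal.ofReal M * eLpNorm (fun x => ((V x : ℝ) : ℂ)) 2 volume with hDdef
  have hDlt : D < ∞ := ENNReal.mul_lt_top ENNReal.ofReal_lt_top hVL2.2
  have hVpos : ∀ x, 0 ≤ V x := fun x => le_trans (hWb x).1 (hWb x).2
  have key : ∀ R : ℕ, ∫⁻ y2 in Tset, (GR R y2)^2 ≤ D ^ (2:ℝ) := by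
    intro R
    set fR : E3 → ℂ := fun y1 => (((Metric.closedBall (0:E3) R).indicator W y1 : ℝ) : ℂ)
      with hfRdef
    have hfRmeas : Measurable fR :=
      Complex.measurable_ofReal.comp (hWmeas.indicator Metric.isClosed_closedBall.measurableSet)
    have hindnn : ∀ y1, 0 ≤ (Metric.closedBall (0:E3) R).indicator W y1 := fun y1 =>
      Set.indicator_nonneg (fun z _ => (hWb z).1) y1
    have hfRnorm : ∀ y1, ‖fR y1‖ = (Metric.closedBall (0:E3) R).indicator W y1 := by
      intro y1
      rw [hfRdef]
      simp only [Complex.norm_real, Real.norm_eq_abs]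
      exact abs_of_nonneg (hindnn y1)
    have hfRle : ∀ y1, ‖fR y1‖ ≤ ‖((V y1 : ℝ) : ℂ)‖ := by
      intro y1
      rw [hfRnorm]
      simp only [Complex.norm_real, Real.norm_eq_abs]
      rw [abs_of_nonneg (hVpos y1)]
      by_cases hy : y1 ∈ Metric.closedBall (0:E3) R
      · rw [Set.indicator_of_mem hy]; exact (hWb y1).2
      · rw [Set.indicator_of_notMem hy]; exact hVpos y1
    have hfRL2 : MemLp fR 2 volume :=
      MemLp.of_le hVL2 hfRmeas.aestronglyMeasurable (Filter.Eventually.of_forall hfRle)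
    have hb1 := hM fR hfRL2
    have hb2 : eLpNorm fR 2 volume ≤ eLpNorm (fun x => ((V x : ℝ) : ℂ)) 2 volume :=
      eLpNorm_mono hfRle
    have hb3 : eLpNorm (fun y2 => ∫ y1, ‖Q y2 y1‖ * ‖fR y1‖) 2 volume ≤ D := by
      apply le_trans hb1
      rw [hDdef]
      exact mul_le_mul_right hb2 _
    -- turn into lintegral bound
    rw [eLpNorm_eq_lintegral_rpow_enorm_toReal (by norm_num) (by norm_num)] at hb3
    simp only [ENNReal.toReal_ofNat] at hb3
    have hb4 := rpow_half_le hb3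
    -- pointwise equality on Tset
    have hptT : ∀ y2 ∈ Tset,
        ((‖∫ y1, ‖Q y2 y1‖ * ‖fR y1‖‖₊ : ℝ≥0∞)) ^ (2:ℝ) = (GR R y2)^2 := by
      intro y2 hy2
      have hfin : GR R y2 < ∞ := by
        have := hy2.2
        simp only [Set.mem_iInter, Set.mem_setOf_eq] at this
        exact this R
      have hptEq : ∀ y1, ENNReal.ofReal (‖Q y2 y1‖ * ‖fR y1‖)
          = (‖Q y2 y1‖₊ : ℝ≥0∞) *
            ((Metric.closedBall (0:E3) R).indicator (fun z => ENNReal.ofReal (W z)) y1) := by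
        intro y1
        rw [ENNReal.ofReal_mul (norm_nonneg _), ofReal_norm, hfRnorm]
        congr 1
        by_cases hy : y1 ∈ Metric.closedBall (0:E3) R
        · rw [Set.indicator_of_mem hy, Set.indicator_of_mem hy]
        · rw [Set.indicator_of_notMem hy, Set.indicator_of_notMem hy, ENNReal.ofReal_zero]
      have hnn : (0:E3 → ℝ) ≤ᵐ[volume] fun y1 => ‖Q y2 y1‖ * ‖fR y1‖ := by
        filter_upwards with y1
        exact mul_nonneg (norm_nonneg _) (norm_nonneg _)
      have hInt : Integrable (fun y1 => ‖Q y2 y1‖ * ‖fR y1‖) volume := by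
        refine ⟨((hQslice y2).norm.mul hfRmeas.norm).aestronglyMeasurable, ?_⟩
        rw [hasFiniteIntegral_iff_ofReal hnn]
        calc (∫⁻ y1, ENNReal.ofReal (‖Q y2 y1‖ * ‖fR y1‖)) = GR R y2 := by
              rw [hGRdef]; exact lintegral_congr fun y1 => hptEq y1
          _ < ∞ := hfin
      have h5 : ENNReal.ofReal (∫ y1, ‖Q y2 y1‖ * ‖fR y1‖) = GR R y2 := by
        rw [ofReal_integral_eq_lintegral_ofReal hInt hnn, hGRdef]
        exact lintegral_congr fun y1 => hptEq y1
      have h6 : ((‖∫ y1, ‖Q y2 y1‖ * ‖fR y1‖‖₊ : ℝ≥0∞)) = GR R y2 := by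
        rw [← h5, ← enorm_eq_nnnorm, Real.enorm_eq_ofReal]
        exact integral_nonneg fun y1 => mul_nonneg (norm_nonneg _) (norm_nonneg _)
      rw [h6]
      rw [show ((2:ℝ)) = ((2:ℕ):ℝ) by norm_num, ENNReal.rpow_natCast]
    calc ∫⁻ y2 in Tset, (GR R y2)^2
        = ∫⁻ y2 in Tset, ((‖∫ y1, ‖Q y2 y1‖ * ‖fR y1‖‖₊ : ℝ≥0∞)) ^ (2:ℝ) := by
          apply setLIntegral_congr_fun hTmeas
          exact fun y2 hy2 => (hptT y2 hy2).symm
      _ ≤ ∫⁻ y2, ((‖∫ y1, ‖Q y2 y1‖ * ‖fR y1‖‖₊ : ℝ≥0∞)) ^ (2:ℝ) :=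
          setLIntegral_le_lintegral _ _
      _ ≤ D ^ (2:ℝ) := hb4
  have hTnull : volume Tset = 0 := by
    by_contra hne
    have hmono2 : Monotone (fun R => fun y2 => (GR R y2)^2) := by
      intro R R' h y2
      exact pow_le_pow_left' (hGRmono y2 h) 2
    have hlim : ∫⁻ y2 in Tset, (⨆ R, (GR R y2)^2) ≤ D ^ (2:ℝ) := by
      rw [lintegral_iSup (fun R => (hGRmeas R).pow_const 2) (fun R R' h => hmono2 h)]
      exact iSup_le key
    have hinf : ∀ y2 ∈ Tset, (⨆ R, (GR R y2)^2) = ∞ := by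
      intro y2 hy2
      rw [← sq_iSup_mono (hGRmono y2), hy2.1]
      simp
    have : (∞ : ℝ≥0∞) * volume Tset ≤ D ^ (2:ℝ) := by
      rw [← setLIntegral_const Tset ∞]
      refine le_trans (le_of_eq ?_) hlim
      apply setLIntegral_congr_fun hTmeas
      exact fun y2 hy2 => ((hinf y2 hy2)).symm
    rw [ENNReal.top_mul hne] at this
    exact absurd (lt_of_le_of_lt this (ENNReal.rpow_lt_top_of_nonneg (by norm_num) hDlt.ne))
      (lt_irrefl _)
  -- Step 2 : pointwise implication off Tset
  have h0ae : ∀ᵐ (y1 : E3) ∂volume, y1 ≠ 0 := by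
    rw [ae_iff]
    simpa using measure_singleton (0 : E3)
  filter_upwards [measure_eq_zero_iff_ae_notMem.1 hTnull] with y2 hy2 hInt1
  by_contra hInt2
  apply hy2
  -- first, a.e. strong measurability of Qv
  have hAESM : AEStronglyMeasurable (fun y1 => Q y2 y1 * (v y1 : ℂ)) volume := by
    have hEq : (fun y1 => Q y2 y1 * (v y1 : ℂ) * Φ y1 * (Φ y1)⁻¹)
        =ᵐ[volume] (fun y1 => Q y2 y1 * (v y1 : ℂ)) := by
      filter_upwards [h0ae] with y1 hy1
      have hΦne : Φ y1 ≠ 0 :=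
        Ffun_ne_zero (mul_pos hlam (norm_pos_iff.mpr (by simpa using hy1)))
      field_simp
    exact AEStronglyMeasurable.congr
      (hInt1.aestronglyMeasurable.mul hΦmeas.inv.aestronglyMeasurable) hEq
  have haeW := hQW y2 hAESM
  have haeN : (fun y1 => (‖Q y2 y1‖₊ : ℝ≥0∞) * ENNReal.ofReal (v y1))
      =ᵐ[volume] (fun y1 => (‖Q y2 y1‖₊ : ℝ≥0∞) * ENNReal.ofReal (W y1)) := by
    filter_upwards [haeW] with y1 h
    have h1 : ENNReal.ofReal ‖Q y2 y1 * (v y1 : ℂ)‖ = ENNReal.ofReal ‖Q y2 y1 * (W y1 : ℂ)‖ := by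
      rw [h]
    rw [norm_mul, norm_mul, ENNReal.ofReal_mul (norm_nonneg _),
      ENNReal.ofReal_mul (norm_nonneg _), ofReal_norm] at h1
    simp only [Complex.norm_real, Real.norm_eq_abs, abs_of_nonneg (hv0 y1),
      abs_of_nonneg (hWb y1).1] at h1
    exact h1
  constructor
  · -- ⨆ R, GR R y2 = ∞
    have hsup : (⨆ R, GR R y2)
        = ∫⁻ y1, (‖Q y2 y1‖₊ : ℝ≥0∞) * ENNReal.ofReal (W y1) := by
      set f : ℕ → E3 → ℝ≥0∞ := fun R y1 => (‖Q y2 y1‖₊ : ℝ≥0∞) *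
        ((Metric.closedBall (0:E3) R).indicator (fun z => ENNReal.ofReal (W z)) y1) with hfdef
      have hfmeas : ∀ R, Measurable (f R) := fun R =>
        ((hQslice y2).nnnorm.coe_nnreal_ennreal).mul
          ((hWmeas.ennreal_ofReal).indicator Metric.isClosed_closedBall.measurableSet)
      have hfmono : Monotone f := by
        intro R R' hRR y1
        apply mul_le_mul_right
        apply Set.indicator_le_indicator_of_subset
        · exact Metric.closedBall_subset_closedBall (by exact_mod_cast hRR)
        · intro z; exact zero_le
      calc (⨆ R, GR R y2) = ⨆ R, ∫⁻ y1, f R y1 := rfl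
        _ = ∫⁻ y1, ⨆ R, f R y1 := (lintegral_iSup hfmeas hfmono).symm
        _ = ∫⁻ y1, (‖Q y2 y1‖₊ : ℝ≥0∞) * ENNReal.ofReal (W y1) := by
            apply lintegral_congr
            intro y1
            rw [hfdef]
            simp only []
            rw [← ENNReal.mul_iSup]
            congr 1
            apply le_antisymm
            · exact iSup_le fun R => Set.indicator_le_self _ _ y1
            · have hmem : y1 ∈ Metric.closedBall (0:E3) ((⌈‖y1‖⌉₊ : ℕ) : ℝ) := by
                rw [Metric.mem_closedBall, dist_zero_right]
                exact Nat.le_ceil _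
              calc ENNReal.ofReal (W y1)
                  = (Metric.closedBall (0:E3) ((⌈‖y1‖⌉₊ : ℕ):ℝ)).indicator
                      (fun z => ENNReal.ofReal (W z)) y1 := (Set.indicator_of_mem hmem (fun z => ENNReal.ofReal (W z))).symm
                _ ≤ ⨆ R : ℕ, (Metric.closedBall (0:E3) (R:ℝ)).indicator
                      (fun z => ENNReal.ofReal (W z)) y1 :=
                    le_iSup (fun R : ℕ => (Metric.closedBall (0:E3) (R:ℝ)).indicator
                      (fun z => ENNReal.ofReal (W z)) y1) ⌈‖y1‖⌉₊
    rw [Set.mem_setOf_eq, hsup, lintegral_congr_ae haeN.symm]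
    have hnfin : ¬ HasFiniteIntegral (fun y1 => Q y2 y1 * (v y1 : ℂ)) volume :=
      fun h => hInt2 ⟨hAESM, h⟩
    rw [hasFiniteIntegral_def, not_lt, top_le_iff] at hnfin
    rw [← hnfin]
    apply lintegral_congr
    intro y1
    rw [enorm_mul, enorm_eq_nnnorm]
    congr 1
    rw [← ofReal_norm]
    simp [abs_of_nonneg (hv0 y1)]
  · -- each GR R y2 < ∞
    simp only [Set.mem_iInter, Set.mem_setOf_eq]
    intro R
    have hcong : GR R y2 = ∫⁻ y1, ((‖Q y2 y1‖₊ : ℝ≥0∞) * ENNReal.ofReal (v y1)) *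
        ((Metric.closedBall (0:E3) R).indicator (fun _ => (1:ℝ≥0∞)) y1) := by
      rw [hGRdef]
      apply lintegral_congr_ae
      filter_upwards [haeN] with y1 h
      by_cases hy : y1 ∈ Metric.closedBall (0:E3) R
      · rw [Set.indicator_of_mem hy, Set.indicator_of_mem hy, mul_one, ← h]
      · rw [Set.indicator_of_notMem hy, Set.indicator_of_notMem hy, mul_zero, mul_zero]
    rw [hcong]
    have hbound : ∀ᵐ y1 ∂volume, ((‖Q y2 y1‖₊ : ℝ≥0∞) * ENNReal.ofReal (v y1)) *
        ((Metric.closedBall (0:E3) R).indicator (fun _ => (1:ℝ≥0∞)) y1)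
        ≤ ENNReal.ofReal (Real.exp (lam * R)) *
          (‖Q y2 y1 * (v y1 : ℂ) * Φ y1‖₊ : ℝ≥0∞) := by
      filter_upwards [h0ae] with y1 hy1
      by_cases hy : y1 ∈ Metric.closedBall (0:E3) R
      · rw [Set.indicator_of_mem hy, mul_one]
        have hnorm : (‖Q y2 y1 * (v y1 : ℂ) * Φ y1‖₊ : ℝ≥0∞)
            = ((‖Q y2 y1‖₊ : ℝ≥0∞) * ENNReal.ofReal (v y1)) * ENNReal.ofReal ‖Φ y1‖ := by
          rw [← enorm_eq_nnnorm, ← ofReal_norm, norm_mul, norm_mul,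
            ENNReal.ofReal_mul (mul_nonneg (norm_nonneg _) (norm_nonneg _)),
            ENNReal.ofReal_mul (norm_nonneg _), ofReal_norm]
          simp [abs_of_nonneg (hv0 y1)]; rfl
        have hone : (1:ℝ≥0∞) ≤ ENNReal.ofReal (Real.exp (lam * R)) * ENNReal.ofReal ‖Φ y1‖ := by
          have hΦlow : Real.exp (-(lam * R)) ≤ ‖Φ y1‖ := by
            apply Ffun_norm_le (mul_pos hlam (norm_pos_iff.mpr (by simpa using hy1)))
            have hle : ‖y1‖ ≤ R := by
              rw [Metric.mem_closedBall, dist_zero_right] at hy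
              exact hy
            nlinarith [hlam.le]
          rw [← ENNReal.ofReal_mul (Real.exp_nonneg _),
            show (1:ℝ≥0∞) = ENNReal.ofReal 1 by simp]
          apply ENNReal.ofReal_le_ofReal
          calc (1:ℝ) = Real.exp (lam * R) * Real.exp (-(lam * R)) := by
                rw [← Real.exp_add]; simp
            _ ≤ Real.exp (lam * R) * ‖Φ y1‖ :=
                mul_le_mul_of_nonneg_left hΦlow (Real.exp_nonneg _)
        calc (‖Q y2 y1‖₊ : ℝ≥0∞) * ENNReal.ofReal (v y1)
            = ((‖Q y2 y1‖₊ : ℝ≥0∞) * ENNReal.ofReal (v y1)) * 1 := (mul_one _).symm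
          _ ≤ ((‖Q y2 y1‖₊ : ℝ≥0∞) * ENNReal.ofReal (v y1)) *
              (ENNReal.ofReal (Real.exp (lam * R)) * ENNReal.ofReal ‖Φ y1‖) :=
              mul_le_mul_right hone _
          _ = ENNReal.ofReal (Real.exp (lam * R)) *
              (((‖Q y2 y1‖₊ : ℝ≥0∞) * ENNReal.ofReal (v y1)) * ENNReal.ofReal ‖Φ y1‖) := by
              ring
          _ = ENNReal.ofReal (Real.exp (lam * R)) *
              (‖Q y2 y1 * (v y1 : ℂ) * Φ y1‖₊ : ℝ≥0∞) := by rw [hnorm]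
      · rw [Set.indicator_of_notMem hy, mul_zero]
        exact zero_le
    calc (∫⁻ y1, ((‖Q y2 y1‖₊ : ℝ≥0∞) * ENNReal.ofReal (v y1)) *
        ((Metric.closedBall (0:E3) R).indicator (fun _ => (1:ℝ≥0∞)) y1))
        ≤ ∫⁻ y1, ENNReal.ofReal (Real.exp (lam * R)) *
          (‖Q y2 y1 * (v y1 : ℂ) * Φ y1‖₊ : ℝ≥0∞) := lintegral_mono_ae hbound
      _ = ENNReal.ofReal (Real.exp (lam * R)) *
          ∫⁻ y1, (‖Q y2 y1 * (v y1 : ℂ) * Φ y1‖₊ : ℝ≥0∞) := lintegral_const_mul' _ _ ENNReal.ofReal_ne_top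
      _ < ∞ := by
          apply ENNReal.mul_lt_top ENNReal.ofReal_lt_top
          exact hInt1.2

/-- Lemma 5.2, first bound: if `Q` has an absolutely bounded kernel on `L²` and
`Qv = 0`, then `sup_y ‖[Qv R⁺(H₀,λ⁴)](·,y)‖_{L²} ≲ 1` uniformly in `λ > 0`. -/
theorem stmt17
    (ε : ℝ) (hε : 0 < ε)
    (v : EuclideanSpace ℝ (Fin 3) → ℝ)
    (hv : ∀ x, 0 ≤ v x ∧ v x ≤ (1 + ‖x‖) ^ (-(5 / 2 : ℝ) - ε))
    (Q : EuclideanSpace ℝ (Fin 3) → EuclideanSpace ℝ (Fin 3) → ℂ)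
    (hQmeas : Measurable (Function.uncurry Q))
    (habs : ∃ M : ℝ, ∀ f : EuclideanSpace ℝ (Fin 3) → ℂ, MemLp f 2 volume →
      eLpNorm (fun y2 => ∫ y1, ‖Q y2 y1‖ * ‖f y1‖) 2 volume
        ≤ ENNReal.ofReal M * eLpNorm f 2 volume)
    (hQv : ∀ y2, ∫ y1, Q y2 y1 * (v y1 : ℂ) = 0) :
    ∃ C : ℝ, 0 < C ∧ ∀ lam : ℝ, 0 < lam → ∀ y : EuclideanSpace ℝ (Fin 3),
      eLpNorm (fun y2 => (1 / (8 * π * lam : ℝ) : ℂ) *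
          ∫ y1, Q y2 y1 * (v y1 : ℂ) * (Ffun (lam * ‖y - y1‖) - Ffun (lam * ‖y‖)))
        2 volume ≤ ENNReal.ofReal C := by
  classical
  obtain ⟨M, hM⟩ := habs
  set V : E3 → ℝ := fun x => (1 + ‖x‖) ^ (-(5 / 2 : ℝ) - ε) with hVdef
  have hVmeas : Measurable V := (contRad' (-(5/2:ℝ) - ε)).measurable
  have hVpos : ∀ x, 0 ≤ V x := fun x => Real.rpow_nonneg (by positivity) _
  have hv0 : ∀ x, 0 ≤ v x := fun x => (hv x).1
  have hVL2c : MemLp (fun x => ((V x : ℝ) : ℂ)) 2 volume := by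
    have h1 : (fun x : E3 => ((V x : ℝ) : ℂ))
        = fun x : E3 => (((1 + ‖x‖) ^ (-(5/2 + ε)) : ℝ) : ℂ) := by
      funext x
      rw [hVdef]
      congr 1
      rw [show (-(5/2:ℝ) - ε) = -(5/2 + ε) by ring]
    rw [h1]
    exact memL2_radialC (by linarith)
  obtain ⟨W, hWmeas, hWb, hWkey⟩ :=
    exists_W (μ := (volume : Measure E3)) v V hVmeas (fun x => ⟨(hv x).1, (hv x).2⟩)
  set f₀ : E3 → ℂ := fun x => (((1 + ‖x‖) ^ (-(3/2 + ε)) : ℝ) : ℂ) with hf₀def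
  have hf₀L2 : MemLp f₀ 2 volume := memL2_radialC (by linarith)
  have hf₀ne : eLpNorm f₀ 2 volume ≠ ∞ := hf₀L2.2.ne
  set K : ℝ := (eLpNorm f₀ 2 volume).toReal with hKdef
  have hK0 : 0 ≤ K := ENNReal.toReal_nonneg
  set M' : ℝ := max M 0 with hM'def
  have hM'0 : 0 ≤ M' := le_max_right _ _
  refine ⟨3 * M' * K / (8 * π) + 1, by positivity, ?_⟩
  intro lam hlam y
  have hπ := Real.pi_pos
  set ΔG : E3 → ℂ := fun y1 => Gfun (lam * ‖y - y1‖) - Gfun (lam * ‖y‖) with hΔGdef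
  have hΔGmeas : Measurable ΔG := by
    apply Measurable.sub _ measurable_const
    exact Gfun_measurable.comp
      (measurable_const.mul (continuous_norm.comp (continuous_const.sub continuous_id)).measurable)
  set fs : E3 → ℂ := fun y1 => ((W y1 * ‖ΔG y1‖ : ℝ) : ℂ) with hfsdef
  have hfsmeas : Measurable fs := Complex.measurable_ofReal.comp (hWmeas.mul hΔGmeas.norm)
  have hΔGb : ∀ y1, ‖ΔG y1‖ ≤ 3 * lam * (1 + ‖y1‖) := by
    intro y1
    have h1 : ‖ΔG y1‖ ≤ 3 * |lam * ‖y - y1‖ - lam * ‖y‖| :=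
      Gfun_lip (by positivity) (by positivity)
    have h2 : |lam * ‖y - y1‖ - lam * ‖y‖| = lam * |‖y - y1‖ - ‖y‖| := by
      rw [← mul_sub, abs_mul, abs_of_pos hlam]
    have h3 : |‖y - y1‖ - ‖y‖| ≤ ‖y1‖ := by
      have := abs_norm_sub_norm_le (y - y1) y
      simpa using this
    have h4 : ‖y1‖ ≤ 1 + ‖y1‖ := by linarith [norm_nonneg y1]
    calc ‖ΔG y1‖ ≤ 3 * (lam * |‖y - y1‖ - ‖y‖|) := by rw [← h2]; exact h1
      _ ≤ 3 * (lam * (1 + ‖y1‖)) := by gcongr; linarith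
      _ = 3 * lam * (1 + ‖y1‖) := by ring
  have hfsle : ∀ y1, ‖fs y1‖ ≤ ‖((3 * lam : ℝ) • f₀) y1‖ := by
    intro y1
    rw [hfsdef, hf₀def]
    simp only [Pi.smul_apply, Complex.real_smul, ← Complex.ofReal_mul, Complex.norm_real,
      Real.norm_eq_abs]
    have hr : (0:ℝ) ≤ (1 + ‖y1‖) ^ (-(3/2 + ε) : ℝ) := Real.rpow_nonneg (by positivity) _
    rw [abs_of_nonneg (mul_nonneg (hWb y1).1 (norm_nonneg _)),
      abs_of_nonneg (by positivity : (0:ℝ) ≤ 3 * lam * (1 + ‖y1‖) ^ (-(3/2 + ε) : ℝ))]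
    have hkey : V y1 * (3 * lam * (1 + ‖y1‖)) = 3 * lam * (1 + ‖y1‖) ^ (-(3/2 + ε) : ℝ) := by
      rw [hVdef]
      have h10 : (1:ℝ) + ‖y1‖ ≠ 0 := by positivity
      have : ((1:ℝ) + ‖y1‖) ^ (-(5/2:ℝ) - ε) * (1 + ‖y1‖) = (1 + ‖y1‖) ^ (-(3/2 + ε) : ℝ) := by
        rw [show (-(3/2 + ε) : ℝ) = (-(5/2:ℝ) - ε) + 1 by ring, Real.rpow_add_one h10]
      calc ((1:ℝ) + ‖y1‖) ^ (-(5/2:ℝ) - ε) * (3 * lam * (1 + ‖y1‖))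
          = 3 * lam * (((1:ℝ) + ‖y1‖) ^ (-(5/2:ℝ) - ε) * (1 + ‖y1‖)) := by ring
        _ = 3 * lam * (1 + ‖y1‖) ^ (-(3/2 + ε) : ℝ) := by rw [this]
    calc W y1 * ‖ΔG y1‖ ≤ V y1 * (3 * lam * (1 + ‖y1‖)) := by
          apply mul_le_mul (hWb y1).2 (hΔGb y1) (norm_nonneg _) (hVpos y1)
      _ = 3 * lam * (1 + ‖y1‖) ^ (-(3/2 + ε) : ℝ) := hkey
  have hfsL2 : MemLp fs 2 volume :=
    MemLp.of_le (hf₀L2.const_smul (3 * lam : ℝ)) hfsmeas.aestronglyMeasurable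
      (Filter.Eventually.of_forall hfsle)
  have hfsnorm : eLpNorm fs 2 volume ≤ ENNReal.ofReal (3 * lam) * eLpNorm f₀ 2 volume := by
    calc eLpNorm fs 2 volume ≤ eLpNorm ((3 * lam : ℝ) • f₀) 2 volume := eLpNorm_mono hfsle
      _ = ‖(3 * lam : ℝ)‖₊ • eLpNorm f₀ 2 volume := eLpNorm_const_smul _ _ _ _
      _ = ENNReal.ofReal (3 * lam) * eLpNorm f₀ 2 volume := by
          rw [ENNReal.smul_def, smul_eq_mul, ← enorm_eq_nnnorm, Real.enorm_eq_ofReal (by positivity)]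
  -- the a.e. dichotomy
  have hae2 := ae_int_of_int_F v W V hv0 hVL2c hWb hWmeas Q hQmeas M hM
    (fun y2 h => hWkey (fun y1 => Q y2 y1) (hQmeas.comp measurable_prodMk_left) h) hlam
  have h0ae : ∀ᵐ (y1 : E3) ∂volume, y1 ≠ 0 := by
    rw [ae_iff]
    simpa using measure_singleton (0 : E3)
  -- pointwise a.e. bound
  have hptw : ∀ᵐ y2 ∂(volume : Measure E3),
      ‖(1 / (8 * π * lam : ℝ) : ℂ) *
          ∫ y1, Q y2 y1 * (v y1 : ℂ) * (Ffun (lam * ‖y - y1‖) - Ffun (lam * ‖y‖))‖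
        ≤ ‖(1 / (8 * π * lam) : ℝ) * ∫ y1, ‖Q y2 y1‖ * ‖fs y1‖‖ := by
    filter_upwards [hae2] with y2 hy2
    have hgnn : (0:ℝ) ≤ ∫ y1, ‖Q y2 y1‖ * ‖fs y1‖ :=
      integral_nonneg fun y1 => mul_nonneg (norm_nonneg _) (norm_nonneg _)
    have hcnn : (0:ℝ) ≤ 1 / (8 * π * lam) := by positivity
    have hIbound : ‖∫ y1, Q y2 y1 * (v y1 : ℂ) * (Ffun (lam * ‖y - y1‖) - Ffun (lam * ‖y‖))‖
        ≤ ∫ y1, ‖Q y2 y1‖ * ‖fs y1‖ := by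
      by_cases hInt : Integrable
          (fun y1 => Q y2 y1 * (v y1 : ℂ) * (Ffun (lam * ‖y - y1‖) - Ffun (lam * ‖y‖))) volume
      swap
      · rw [integral_undef hInt, norm_zero]
        exact hgnn
      -- the common final estimate
      have hfinal : ∀ (hval : (∫ y1, Q y2 y1 * (v y1 : ℂ) *
            (Ffun (lam * ‖y - y1‖) - Ffun (lam * ‖y‖)))
            = ∫ y1, Q y2 y1 * ΔG y1 * (W y1 : ℂ)),
          ‖∫ y1, Q y2 y1 * (v y1 : ℂ) * (Ffun (lam * ‖y - y1‖) - Ffun (lam * ‖y‖))‖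
            ≤ ∫ y1, ‖Q y2 y1‖ * ‖fs y1‖ := by
        intro hval
        rw [hval]
        calc ‖∫ y1, Q y2 y1 * ΔG y1 * (W y1 : ℂ)‖
            ≤ ∫ y1, ‖Q y2 y1 * ΔG y1 * (W y1 : ℂ)‖ := norm_integral_le_integral_norm _
          _ = ∫ y1, ‖Q y2 y1‖ * ‖fs y1‖ := by
              apply integral_congr_ae
              filter_upwards with y1
              rw [norm_mul, norm_mul, hfsdef]
              simp only [Complex.norm_real, Real.norm_eq_abs]
              rw [abs_of_nonneg (hWb y1).1,
                abs_of_nonneg (mul_nonneg (hWb y1).1 (norm_nonneg _))]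
              ring
      by_cases hy0 : y = 0
      · -- the case y = 0 : use the cancellation from hQv
        subst hy0
        have hF0 : Ffun (lam * ‖(0:E3)‖) = 0 := by
          simp [Ffun]
        have hrw : (fun y1 : E3 => Q y2 y1 * (v y1 : ℂ) *
              (Ffun (lam * ‖(0:E3) - y1‖) - Ffun (lam * ‖(0:E3)‖)))
            = fun y1 => Q y2 y1 * (v y1 : ℂ) * Ffun (lam * ‖y1‖) := by
          funext y1
          rw [hF0, sub_zero, zero_sub, norm_neg]
        have hInt' : Integrable (fun y1 => Q y2 y1 * (v y1 : ℂ) * Ffun (lam * ‖y1‖)) volume := by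
          rw [← hrw]; exact hInt
        have hIv : Integrable (fun y1 => Q y2 y1 * (v y1 : ℂ)) volume := hy2 hInt'
        have haeq0 : (fun y1 => Q y2 y1 * (v y1 : ℂ) * Ffun (lam * ‖y1‖))
            =ᵐ[volume] fun y1 => Q y2 y1 * (v y1 : ℂ) * Gfun (lam * ‖y1‖) := by
          filter_upwards [h0ae] with y1 hy1
          rw [Gfun_eq_Ffun (ne_of_gt (mul_pos hlam (norm_pos_iff.mpr hy1)))]
        have hIntG : Integrable (fun y1 => Q y2 y1 * (v y1 : ℂ) * Gfun (lam * ‖y1‖)) volume :=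
          hInt'.congr haeq0
        have hIc : Integrable (fun y1 => Q y2 y1 * (v y1 : ℂ) * Gfun (lam * ‖(0:E3)‖)) volume :=
          hIv.mul_const _
        have hΔG0 : ΔG = fun y1 => Gfun (lam * ‖y1‖) - Gfun (lam * ‖(0:E3)‖) := by
          funext y1
          rw [hΔGdef]
          simp only [zero_sub, norm_neg]
        have hIntΔ : Integrable (fun y1 => Q y2 y1 * (v y1 : ℂ) * ΔG y1) volume := by
          rw [hΔG0]
          have := hIntG.sub hIc
          apply this.congr
          filter_upwards with y1
          simp only [Pi.sub_apply, mul_sub]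
        have hval1 : (∫ y1, Q y2 y1 * (v y1 : ℂ) *
              (Ffun (lam * ‖(0:E3) - y1‖) - Ffun (lam * ‖(0:E3)‖)))
            = ∫ y1, Q y2 y1 * (v y1 : ℂ) * ΔG y1 := by
          rw [hrw, hΔG0]
          rw [integral_congr_ae haeq0]
          have hsplit : (∫ y1, Q y2 y1 * (v y1 : ℂ) *
                (Gfun (lam * ‖y1‖) - Gfun (lam * ‖(0:E3)‖)))
              = (∫ y1, Q y2 y1 * (v y1 : ℂ) * Gfun (lam * ‖y1‖))
                - ∫ y1, Q y2 y1 * (v y1 : ℂ) * Gfun (lam * ‖(0:E3)‖) := by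
            rw [← integral_sub hIntG hIc]
            apply integral_congr_ae
            filter_upwards with y1
            rw [mul_sub]
          rw [hsplit]
          have hzero : (∫ y1, Q y2 y1 * (v y1 : ℂ) * Gfun (lam * ‖(0:E3)‖)) = 0 := by
            rw [integral_mul_const, hQv y2, zero_mul]
          rw [hzero, sub_zero]
        -- switch v to W
        have hAESM : AEStronglyMeasurable
            (fun y1 => Q y2 y1 * ΔG y1 * (v y1 : ℂ)) volume := by
          apply hIntΔ.aestronglyMeasurable.congr
          filter_upwards with y1
          rw [mul_right_comm]
        have hsw := hWkey (fun y1 => Q y2 y1 * ΔG y1)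
          ((hQmeas.comp measurable_prodMk_left).mul hΔGmeas) hAESM
        apply hfinal
        rw [hval1]
        calc (∫ y1, Q y2 y1 * (v y1 : ℂ) * ΔG y1)
            = ∫ y1, Q y2 y1 * ΔG y1 * (v y1 : ℂ) := by
              apply integral_congr_ae
              filter_upwards with y1
              rw [mul_right_comm]
          _ = ∫ y1, Q y2 y1 * ΔG y1 * (W y1 : ℂ) := integral_congr_ae hsw
      · -- the case y ≠ 0
        have hyae : ∀ᵐ (y1 : E3) ∂volume, y1 ≠ y := by
          rw [ae_iff]
          simpa using measure_singleton y
        have haeq : (fun y1 => Q y2 y1 * (v y1 : ℂ) *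
              (Ffun (lam * ‖y - y1‖) - Ffun (lam * ‖y‖)))
            =ᵐ[volume] fun y1 => Q y2 y1 * (v y1 : ℂ) * ΔG y1 := by
          filter_upwards [hyae] with y1 h
          simp only [hΔGdef]
          have h1 : Gfun (lam * ‖y - y1‖) = Ffun (lam * ‖y - y1‖) := by
            apply Gfun_eq_Ffun
            apply ne_of_gt
            apply mul_pos hlam
            rw [norm_pos_iff, sub_ne_zero]
            exact fun hc => h (hc.symm)
          have h2 : Gfun (lam * ‖y‖) = Ffun (lam * ‖y‖) := by
            apply Gfun_eq_Ffun
            exact ne_of_gt (mul_pos hlam (norm_pos_iff.mpr hy0))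
          rw [h1, h2]
        have hIntΔ : Integrable (fun y1 => Q y2 y1 * (v y1 : ℂ) * ΔG y1) volume :=
          hInt.congr haeq
        have hAESM : AEStronglyMeasurable
            (fun y1 => Q y2 y1 * ΔG y1 * (v y1 : ℂ)) volume := by
          apply hIntΔ.aestronglyMeasurable.congr
          filter_upwards with y1
          rw [mul_right_comm]
        have hsw := hWkey (fun y1 => Q y2 y1 * ΔG y1)
          ((hQmeas.comp measurable_prodMk_left).mul hΔGmeas) hAESM
        apply hfinal
        rw [integral_congr_ae haeq]
        calc (∫ y1, Q y2 y1 * (v y1 : ℂ) * ΔG y1)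
            = ∫ y1, Q y2 y1 * ΔG y1 * (v y1 : ℂ) := by
              apply integral_congr_ae
              filter_upwards with y1
              rw [mul_right_comm]
          _ = ∫ y1, Q y2 y1 * ΔG y1 * (W y1 : ℂ) := integral_congr_ae hsw
    have hcn : ‖(1 / (8 * π * lam : ℝ) : ℂ)‖ = 1 / (8 * π * lam) := by
      rw [norm_div, norm_one, Complex.norm_real, Real.norm_eq_abs,
        abs_of_nonneg (by positivity : (0:ℝ) ≤ 8 * π * lam)]
    rw [norm_mul, hcn, Real.norm_eq_abs, abs_of_nonneg (mul_nonneg hcnn hgnn)]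
    exact mul_le_mul_of_nonneg_left hIbound hcnn
  -- conclude via eLpNorm estimates
  calc eLpNorm (fun y2 => (1 / (8 * π * lam : ℝ) : ℂ) *
          ∫ y1, Q y2 y1 * (v y1 : ℂ) * (Ffun (lam * ‖y - y1‖) - Ffun (lam * ‖y‖))) 2 volume
      ≤ eLpNorm (fun y2 => (1 / (8 * π * lam) : ℝ) * ∫ y1, ‖Q y2 y1‖ * ‖fs y1‖) 2 volume :=
        eLpNorm_mono_ae hptw
    _ = ‖(1 / (8 * π * lam) : ℝ)‖₊ • eLpNorm (fun y2 => ∫ y1, ‖Q y2 y1‖ * ‖fs y1‖) 2 volume := by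
        have hfuneq : (fun y2 : E3 => (1 / (8 * π * lam) : ℝ) * ∫ y1, ‖Q y2 y1‖ * ‖fs y1‖)
            = (1 / (8 * π * lam) : ℝ) • (fun y2 : E3 => ∫ y1, ‖Q y2 y1‖ * ‖fs y1‖) := rfl
        rw [hfuneq, eLpNorm_const_smul]
        rfl
    _ ≤ ENNReal.ofReal (1 / (8 * π * lam)) * (ENNReal.ofReal M * eLpNorm fs 2 volume) := by
        rw [ENNReal.smul_def, smul_eq_mul, ← enorm_eq_nnnorm, Real.enorm_eq_ofReal (by positivity)]
        exact mul_le_mul_right (hM fs hfsL2) _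
    _ ≤ ENNReal.ofReal (1 / (8 * π * lam)) *
        (ENNReal.ofReal M' * (ENNReal.ofReal (3 * lam) * eLpNorm f₀ 2 volume)) := by
        apply mul_le_mul_right
        exact mul_le_mul' (ENNReal.ofReal_le_ofReal (le_max_left _ _)) hfsnorm
    _ = ENNReal.ofReal (1 / (8 * π * lam) * (M' * (3 * lam * K))) := by
        rw [ENNReal.ofReal_mul (by positivity : (0:ℝ) ≤ 1 / (8 * π * lam)),
          ENNReal.ofReal_mul hM'0,
          ENNReal.ofReal_mul (by positivity : (0:ℝ) ≤ 3 * lam), hKdef,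
          ENNReal.ofReal_toReal hf₀ne]
    _ ≤ ENNReal.ofReal (3 * M' * K / (8 * π) + 1) := by
        apply ENNReal.ofReal_le_ofReal
        have hlamne : lam ≠ 0 := ne_of_gt hlam
        have hπne : π ≠ 0 := ne_of_gt hπ
        have : 1 / (8 * π * lam) * (M' * (3 * lam * K)) = 3 * M' * K / (8 * π) := by
          field_simp
        rw [this]
        linarith
end
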